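/- (Gebauer–Möller / second Buchberger criterion, chain criterion) Let f, g, h be nonzero polynomials such that lm(h) divides lcm(lm f, lm g). If Spoly(f, h) and Spoly(g, h) both have standard representations with respect to a set G containing f, g, h, then Spoly(f, g) also has a standard representation with respect to G. -/

import Mathlib

open MvPolynomial

/-- A global monomial ordering on the monomials of `k[x_1,…,x_n]`,
identified with exponent vectors `Fin n →₀ ℕ`. -/
structure MonOrd (n : ℕ) where
  lt : (Fin n →₀ ℕ) → (Fin n →₀ ℕ) → Prop
  strict : IsStrictTotalOrder (Fin n →₀ ℕ) lt
  compat : ∀ a b c, lt a b → lt (a + c) (b + c)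
  global : ∀ a, a ≠ 0 → lt 0 a

noncomputable def MonOrd.linOrd {n : ℕ} (mo : MonOrd n) :
    LinearOrder (Fin n →₀ ℕ) :=
  haveI := mo.strict
  haveI := Classical.decRel mo.lt
  linearOrderOfSTO mo.lt

variable {n : ℕ} {k : Type*} [Field k]

/-- Leading monomial (junk value `0` for the zero polynomial). -/
noncomputable def lmon (mo : MonOrd n) (f : MvPolynomial (Fin n) k) : Fin n →₀ ℕ :=
  letI := mo.linOrd
  if h : f.support.Nonempty then f.support.max' h else 0

/-- Leading term. -/
noncomputable def lterm (mo : MonOrd n) (f : MvPolynomial (Fin n) k) :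
    MvPolynomial (Fin n) k :=
  monomial (lmon mo f) (f.coeff (lmon mo f))

/-- The leading term ideal of `I`. -/
noncomputable def ltIdeal (mo : MonOrd n) (I : Ideal (MvPolynomial (Fin n) k)) :
    Ideal (MvPolynomial (Fin n) k) :=
  Ideal.span { p | ∃ f ∈ I, f ≠ 0 ∧ p = lterm mo f }

/-- The S-polynomial of `f` and `g`. -/
noncomputable def spoly (mo : MonOrd n) (f g : MvPolynomial (Fin n) k) :
    MvPolynomial (Fin n) k :=
  (monomial ((lmon mo f ⊔ lmon mo g) - lmon mo f) (f.coeff (lmon mo f))⁻¹) * f -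
  (monomial ((lmon mo f ⊔ lmon mo g) - lmon mo g) (g.coeff (lmon mo g))⁻¹) * g

/-- `p` has a standard representation with respect to the finite set `G`:
`p = ∑ h_g g` with `lm (h_g g) ≤ lm p` whenever `h_g g ≠ 0`. -/
def stdRep (mo : MonOrd n) (G : Finset (MvPolynomial (Fin n) k))
    (p : MvPolynomial (Fin n) k) : Prop :=
  ∃ h : MvPolynomial (Fin n) k → MvPolynomial (Fin n) k,
    p = ∑ g ∈ G, h g * g ∧
    ∀ g ∈ G, h g * g ≠ 0 → ¬ mo.lt (lmon mo p) (lmon mo (h g * g))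

/-- `p` has a `t`-representation with respect to `G`: `p = ∑ h_g g` with
`lm (h_g g) < t` whenever `h_g g ≠ 0`. -/
def lcmRep (mo : MonOrd n) (G : Finset (MvPolynomial (Fin n) k))
    (p : MvPolynomial (Fin n) k) (t : Fin n →₀ ℕ) : Prop :=
  ∃ h : MvPolynomial (Fin n) k → MvPolynomial (Fin n) k,
    p = ∑ g ∈ G, h g * g ∧
    ∀ g ∈ G, h g * g ≠ 0 → mo.lt (lmon mo (h g * g)) t


lemma GM_lmon_mem (mo : MonOrd n) {p : MvPolynomial (Fin n) k} (hp : p ≠ 0) :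
    lmon mo p ∈ p.support := by
  letI := mo.linOrd
  have h : p.support.Nonempty := Finset.nonempty_iff_ne_empty.2 (fun h0 => hp (MvPolynomial.support_eq_empty.1 h0))
  rw [lmon, dif_pos h]
  exact p.support.max'_mem h

lemma GM_support_lt (mo : MonOrd n) {p : MvPolynomial (Fin n) k} {m t : Fin n →₀ ℕ}
    (hm : m ∈ p.support) (ht : mo.lt (lmon mo p) t) : mo.lt m t := by
  haveI := mo.strict
  letI := mo.linOrd
  have h : p.support.Nonempty := ⟨m, hm⟩
  have hle : m = lmon mo p ∨ mo.lt m (lmon mo p) := by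
    rw [lmon, dif_pos h]
    exact p.support.le_max' m hm
  rcases hle with rfl | hlt
  · exact ht
  · exact _root_.trans hlt ht

lemma GM_bound (mo : MonOrd n) {u : MvPolynomial (Fin n) k} {a t L : Fin n →₀ ℕ}
    (ha : a + t = L) (hu : u ≠ 0 → mo.lt (lmon mo u) t)
    {m : Fin n →₀ ℕ} (hm : m ∈ (monomial a (1:k) * u).support) : mo.lt m L := by
  rw [MvPolynomial.mem_support_iff, coeff_monomial_mul'] at hm
  split_ifs at hm with hle
  · rw [one_mul] at hm
    have hmu : m - a ∈ u.support := MvPolynomial.mem_support_iff.2 hm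
    have hu' : u ≠ 0 := fun h => by simp [h] at hmu
    have h1 : mo.lt (m - a) t := GM_support_lt mo hmu (hu hu')
    have h2 := mo.compat _ _ a h1
    rwa [tsub_add_cancel_of_le hle, add_comm t a, ha] at h2
  · exact absurd rfl hm

/-- Gebauer–Möller chain criterion: if `lm q` divides `lcm(lm f, lm g)` and both
`Spoly(f, q)` and `Spoly(g, q)` have representations w.r.t. `G ∋ f, g, q` with leading
monomials below the corresponding lcm's, then so does `Spoly(f, g)`. -/
theorem stmt9 (mo : MonOrd n) (G : Finset (MvPolynomial (Fin n) k))
    (f g q : MvPolynomial (Fin n) k) (hfG : f ∈ G) (hgG : g ∈ G) (hqG : q ∈ G)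
    (hf : f ≠ 0) (hg : g ≠ 0) (hq : q ≠ 0)
    (hdvd : ∃ c, lmon mo f ⊔ lmon mo g = lmon mo q + c)
    (h₁ : lcmRep mo G (spoly mo f q) (lmon mo f ⊔ lmon mo q))
    (h₂ : lcmRep mo G (spoly mo g q) (lmon mo g ⊔ lmon mo q)) :
    lcmRep mo G (spoly mo f g) (lmon mo f ⊔ lmon mo g) := by
  classical
  obtain ⟨c, hc⟩ := hdvd
  obtain ⟨h1, e1, b1⟩ := h₁
  obtain ⟨h2, e2, b2⟩ := h₂
  set L := lmon mo f ⊔ lmon mo g with hL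
  set A := lmon mo f ⊔ lmon mo q with hA
  set B := lmon mo g ⊔ lmon mo q with hB
  have hqL : lmon mo q ≤ L := hc ▸ le_self_add
  have hAL : A ≤ L := sup_le le_sup_left hqL
  have hBL : B ≤ L := sup_le le_sup_right hqL
  have haL : (L - A) + A = L := tsub_add_cancel_of_le hAL
  have hbL : (L - B) + B = L := tsub_add_cancel_of_le hBL
  have key : spoly mo f g =
      monomial (L - A) (1:k) * spoly mo f q - monomial (L - B) (1:k) * spoly mo g q := by
    simp only [spoly, mul_sub, ← mul_assoc, monomial_mul, one_mul]
    rw [tsub_add_tsub_cancel hAL le_sup_left, tsub_add_tsub_cancel hAL le_sup_right,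
        tsub_add_tsub_cancel hBL le_sup_left, tsub_add_tsub_cancel hBL le_sup_right]
    ring
  refine ⟨fun r => monomial (L - A) (1:k) * h1 r - monomial (L - B) (1:k) * h2 r, ?_, ?_⟩
  · rw [key, e1, e2, Finset.mul_sum, Finset.mul_sum, ← Finset.sum_sub_distrib]
    exact Finset.sum_congr rfl fun r hr => by ring
  · intro r hr hne
    have hsub : (monomial (L - A) (1:k) * h1 r - monomial (L - B) (1:k) * h2 r) * r =
        monomial (L - A) (1:k) * (h1 r * r) - monomial (L - B) (1:k) * (h2 r * r) := by ring
    rw [hsub]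
    rw [hsub] at hne
    have hmem := GM_lmon_mem mo hne
    have hsup := MvPolynomial.support_sub (p := monomial (L - A) (1:k) * (h1 r * r))
      (q := monomial (L - B) (1:k) * (h2 r * r))
    rcases Finset.mem_union.1 (hsup hmem) with h | h
    · exact GM_bound mo haL (fun h0 => b1 r hr h0) h
    · exact GM_bound mo hbL (fun h0 => b2 r hr h0) h
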